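/- For natural numbers n and t, the maximum cardinality of a family C of subsets of {1, …, n} with the property that for all distinct A, B ∈ C, A ⊆ B implies |B| − |A| > t, equals the sum of the binomial coefficients C(n, ℓ) over all ℓ with 0 ≤ ℓ ≤ n and ℓ ≡ ⌊n/2⌋ (mod t+1). -/
import Mathlib

open Finset

/-- Binomial coefficients are nonincreasing above the middle. -/
private lemma choose_mono_up (n y : ℕ) (hy : n / 2 ≤ y) :
    n.choose (y + 1) ≤ n.choose y := by
  rcases le_or_gt n y with h | h
  · have : n < y + 1 := by omega
    simp [Nat.choose_eq_zero_of_lt this]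
  · rcases Nat.lt_or_ge (n - y - 1) (n / 2) with h2 | h2
    · have e1 : n.choose (y+1) = n.choose (n - (y+1)) := (Nat.choose_symm (by omega)).symm
      have e2 : n.choose y = n.choose (n - y) := (Nat.choose_symm (by omega)).symm
      rw [e1, e2]
      have h3 : n - (y+1) + 1 = n - y := by omega
      calc n.choose (n - (y+1)) ≤ n.choose (n - (y+1) + 1) :=
            Nat.choose_le_succ_of_lt_half_left (by omega)
        _ = n.choose (n - y) := by rw [h3]
    · have e1 : n.choose (y+1) = n.choose (n - (y+1)) := (Nat.choose_symm (by omega)).symm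
      rw [e1]
      have h3 : n - (y+1) = y := by omega
      rw [h3]


private def fcir (M N : ℕ) (x : ZMod M) : ℕ :=
  ∑ ℓ ∈ range (N+1), if (ℓ : ZMod M) * 2 = x + N then N.choose ℓ else 0

private lemma fcir_zero (M : ℕ) (x : ZMod M) :
    fcir M 0 x = if (0 : ZMod M) = x then 1 else 0 := by
  simp [fcir]

private lemma fcir_symm (M N : ℕ) (x : ZMod M) : fcir M N (-x) = fcir M N x := by
  unfold fcir
  rw [← Finset.sum_range_reflect]
  refine Finset.sum_congr rfl fun ℓ hℓ => ?_
  rw [Finset.mem_range] at hℓ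
  have hle : ℓ ≤ N := by omega
  have h1 : N + 1 - 1 - ℓ = N - ℓ := by omega
  rw [h1]
  have hcast : ((N - ℓ : ℕ) : ZMod M) = (N : ZMod M) - ℓ := by
    push_cast [Nat.cast_sub hle]; ring
  have hchoose : N.choose (N - ℓ) = N.choose ℓ := Nat.choose_symm hle
  have hcond : (((N - ℓ : ℕ) : ZMod M) * 2 = -x + N) ↔ ((ℓ : ZMod M) * 2 = x + N) := by
    rw [hcast]
    constructor <;> intro h <;> linear_combination -h
  simp only [hcond, hchoose]

private lemma fcir_succ (M N : ℕ) (x : ZMod M) :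
    fcir M (N+1) x = fcir M N (x-1) + fcir M N (x+1) := by
  have hQ : fcir M N (x-1)
      = ∑ i ∈ range (N+1), (if ((i+1 : ℕ) : ZMod M) * 2 = x + ((N+1 : ℕ) : ZMod M)
          then N.choose i else 0) := by
    unfold fcir
    refine Finset.sum_congr rfl fun i _ => ?_
    have hcond : ((i : ZMod M) * 2 = (x-1) + N) ↔ (((i+1 : ℕ) : ZMod M) * 2 = x + ((N+1:ℕ) : ZMod M)) := by
      push_cast
      constructor <;> intro h <;> linear_combination h
    simp only [hcond]
  have hP : fcir M N (x+1)
      = (∑ i ∈ range N, (if ((i+1 : ℕ) : ZMod M) * 2 = x + ((N+1:ℕ) : ZMod M)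
          then N.choose (i+1) else 0))
        + (if ((0 : ℕ) : ZMod M) * 2 = x + ((N+1:ℕ):ZMod M) then N.choose 0 else 0) := by
    unfold fcir
    rw [Finset.sum_range_succ']
    congr 1
    · refine Finset.sum_congr rfl fun i _ => ?_
      have hcond : (((i+1:ℕ) : ZMod M) * 2 = (x+1) + N) ↔ (((i+1 : ℕ) : ZMod M) * 2 = x + ((N+1:ℕ) : ZMod M)) := by
        push_cast
        constructor <;> intro h <;> linear_combination h
      simp only [hcond]
    · have hcond : (((0:ℕ) : ZMod M) * 2 = (x+1) + N) ↔ (((0 : ℕ) : ZMod M) * 2 = x + ((N+1:ℕ) : ZMod M)) := by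
        push_cast
        constructor <;> intro h <;> linear_combination h
      simp only [hcond]
  rw [hQ, hP]
  unfold fcir
  rw [Finset.sum_range_succ']
  have hterm : ∀ i ∈ range (N+1),
      (if ((i+1:ℕ) : ZMod M) * 2 = x + ((N+1:ℕ):ZMod M) then (N+1).choose (i+1) else 0)
      = (if ((i+1:ℕ) : ZMod M) * 2 = x + ((N+1:ℕ):ZMod M) then N.choose i else 0)
        + (if ((i+1:ℕ) : ZMod M) * 2 = x + ((N+1:ℕ):ZMod M) then N.choose (i+1) else 0) := by
    intro i _
    by_cases h : ((i+1:ℕ) : ZMod M) * 2 = x + ((N+1:ℕ):ZMod M)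
    · simp only [if_pos h]; exact Nat.choose_succ_succ' N i
    · simp only [if_neg h]
  rw [Finset.sum_congr rfl hterm, Finset.sum_add_distrib]
  have hlast : (∑ i ∈ range (N+1), if ((i+1:ℕ) : ZMod M) * 2 = x + ((N+1:ℕ):ZMod M)
      then N.choose (i+1) else 0)
      = ∑ i ∈ range N, if ((i+1:ℕ) : ZMod M) * 2 = x + ((N+1:ℕ):ZMod M) then N.choose (i+1) else 0 := by
    rw [Finset.sum_range_succ, Nat.choose_eq_zero_of_lt (by omega)]
    simp
  rw [hlast]
  have h0 : (if ((0:ℕ) : ZMod M) * 2 = x + ((N+1:ℕ):ZMod M) then (N+1).choose 0 else 0)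
      = (if ((0:ℕ) : ZMod M) * 2 = x + ((N+1:ℕ):ZMod M) then N.choose 0 else 0) := by
    simp
  rw [h0]
  push_cast
  ring

private def NearD (M : ℕ) (x : ZMod M) (d : ℕ) : Prop := x = (d : ZMod M) ∨ x = -(d : ZMod M)

private lemma fcir_near {M N : ℕ} {x : ZMod M} {d : ℕ} (h : NearD M x d) :
    fcir M N x = fcir M N ((d : ZMod M)) := by
  rcases h with h | h
  · rw [h]
  · rw [h, fcir_symm]

private lemma fcir_step (m N d : ℕ) (hm : 0 < m) (hd : d ≤ m) :
    fcir (2*m) (N+1) ((d : ZMod (2*m)))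
      = fcir (2*m) N (((if d = 0 then 1 else d-1 : ℕ) : ZMod (2*m)))
        + fcir (2*m) N (((if d = m then m-1 else d+1 : ℕ) : ZMod (2*m))) := by
  rw [fcir_succ]
  congr 1
  · by_cases h0 : d = 0
    · subst h0
      rw [if_pos rfl]
      have : ((0:ℕ) : ZMod (2*m)) - 1 = -(((1:ℕ) : ZMod (2*m))) := by push_cast; ring
      rw [this, fcir_symm]
    · rw [if_neg h0]
      have h1 : 1 ≤ d := by omega
      have : ((d:ℕ) : ZMod (2*m)) - 1 = (((d - 1 : ℕ)) : ZMod (2*m)) := by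
        rw [Nat.cast_sub h1]; push_cast; ring
      rw [this]
  · by_cases hdm : d = m
    · rw [if_pos hdm]
      have h2m : (((2*m : ℕ)) : ZMod (2*m)) = 0 := ZMod.natCast_self _
      have : ((d:ℕ) : ZMod (2*m)) + 1 = -(((m-1 : ℕ)) : ZMod (2*m)) := by
        have heq : ((d:ℕ) : ZMod (2*m)) + 1 + (((m-1:ℕ)) : ZMod (2*m)) = 0 := by
          have hsum : ((d:ℕ) + 1 + (m-1) : ℕ) = 2*m := by omega
          calc ((d:ℕ) : ZMod (2*m)) + 1 + (((m-1:ℕ)) : ZMod (2*m))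
              = (((d + 1 + (m-1) : ℕ)) : ZMod (2*m)) := by push_cast; ring
            _ = 0 := by rw [hsum, h2m]
        linear_combination heq
      rw [this, fcir_symm]
    · rw [if_neg hdm]
      have : ((d:ℕ) : ZMod (2*m)) + 1 = (((d + 1 : ℕ)) : ZMod (2*m)) := by push_cast; ring
      rw [this]

private lemma funi (m : ℕ) (hm : 0 < m) :
    ∀ N d e (x y : ZMod (2*m)), d ≤ m → e ≤ m → NearD (2*m) x d → NearD (2*m) y e →
      e ≤ d → d % 2 = e % 2 → fcir (2*m) N x ≤ fcir (2*m) N y := by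
  intro N
  induction N with
  | zero =>
    intro d e x y hd he hx hy hede hpar
    rw [fcir_zero, fcir_zero]
    by_cases hx0 : (0 : ZMod (2*m)) = x
    · have hd0 : d = 0 := by
        have hcast : ((d:ℕ) : ZMod (2*m)) = 0 := by
          rcases hx with h | h
          · rw [← h, ← hx0]
          · have : -((d:ℕ) : ZMod (2*m)) = 0 := by rw [← h, ← hx0]
            linear_combination -this
        have := (ZMod.natCast_eq_zero_iff d (2*m)).mp hcast
        exact Nat.eq_zero_of_dvd_of_lt this (by omega)
      have he0 : e = 0 := by omega
      have hy0 : (0 : ZMod (2*m)) = y := by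
        rcases hy with h | h <;> rw [h, he0] <;> simp
      rw [if_pos hx0, if_pos hy0]
    · rw [if_neg hx0]
      exact Nat.zero_le _
  | succ N ih =>
    intro d e x y hd he hx hy hede hpar
    have ex : fcir (2*m) (N+1) x = fcir (2*m) (N+1) ((d : ZMod (2*m))) := fcir_near hx
    have ey : fcir (2*m) (N+1) y = fcir (2*m) (N+1) ((e : ZMod (2*m))) := fcir_near hy
    by_cases hde : e = d
    · subst hde; rw [ex, ey]
    · have hgap : e + 2 ≤ d := by omega
      rw [ex, ey, fcir_step m N d hm hd, fcir_step m N e hm he]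
      have hd0 : ¬ (d = 0) := by omega
      have hdm' : ¬ (e = m) := by omega
      rw [if_neg hd0, if_neg hdm']
      apply Nat.add_le_add
      · -- inner pair : d-1 vs (if e = 0 then 1 else e-1)
        apply ih (d-1) (if e = 0 then 1 else e-1) _ _ (by omega) (by split <;> omega)
          (Or.inl rfl) (Or.inl rfl) (by split <;> omega) (by split <;> omega)
      · -- outer pair : (if d = m then m-1 else d+1) vs e+1
        apply ih (if d = m then m-1 else d+1) (e+1) _ _ (by split <;> omega) (by omega)
          (Or.inl rfl) (Or.inl rfl) (by split <;> omega) (by split <;> omega)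

private lemma fS (n m r : ℕ) (hm : 0 < m) :
    (∑ ℓ ∈ range (n+1), if ℓ % m = r % m then n.choose ℓ else 0)
      = fcir (2*m) n (((2*r : ℕ) : ZMod (2*m)) - n) := by
  unfold fcir
  refine Finset.sum_congr rfl fun ℓ _ => ?_
  have hcond : (ℓ % m = r % m) ↔ ((ℓ : ZMod (2*m)) * 2 = (((2*r : ℕ) : ZMod (2*m)) - n) + n) := by
    have h1 : ((((2*r : ℕ) : ZMod (2*m)) - n) + n) = ((2*r : ℕ) : ZMod (2*m)) := by ring
    rw [h1]
    have h2 : ((ℓ : ZMod (2*m)) * 2) = ((2*ℓ : ℕ) : ZMod (2*m)) := by push_cast; ring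
    rw [h2, ZMod.natCast_eq_natCast_iff']
    rw [Nat.mul_mod_mul_left, Nat.mul_mod_mul_left]
    omega
  simp only [hcond]

private def distOf (m a : ℕ) : ℕ := if a % (2*m) ≤ m then a % (2*m) else 2*m - a % (2*m)

private lemma distOf_near (m a : ℕ) (hm : 0 < m) :
    NearD (2*m) ((a : ZMod (2*m))) (distOf m a) := by
  have hmod : a % (2*m) < 2*m := Nat.mod_lt _ (by omega)
  have hx : ((a : ℕ) : ZMod (2*m)) = (((a % (2*m) : ℕ)) : ZMod (2*m)) :=
    (ZMod.natCast_mod a (2*m)).symm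
  unfold distOf NearD
  split
  · left; rw [hx]
  · right
    rw [hx]
    have hsum : ((a % (2*m)) + (2*m - a % (2*m)) : ℕ) = 2*m := by omega
    have h0 : (((a % (2*m)) + (2*m - a % (2*m)) : ℕ) : ZMod (2*m)) = 0 := by
      rw [hsum]; exact ZMod.natCast_self _
    push_cast at h0
    linear_combination h0

private lemma distOf_le (m a : ℕ) (hm : 0 < m) : distOf m a ≤ m := by
  have hmod : a % (2*m) < 2*m := Nat.mod_lt _ (by omega)
  unfold distOf; split <;> omega

private lemma distOf_parity (m a : ℕ) (hm : 0 < m) : distOf m a % 2 = a % 2 := by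
  have hmod : a % (2*m) < 2*m := Nat.mod_lt _ (by omega)
  have h1 : a % (2*m) % 2 = a % 2 := Nat.mod_mod_of_dvd a ⟨m, rfl⟩
  unfold distOf; split <;> omega

theorem key_lemma (n m r : ℕ) (hm : 0 < m) :
    (∑ ℓ ∈ range (n+1), if ℓ % m = r % m then n.choose ℓ else 0) ≤
    (∑ ℓ ∈ range (n+1), if ℓ % m = (n/2) % m then n.choose ℓ else 0) := by
  rw [fS n m r hm, fS n m (n/2) hm]
  set K := (n+1)*(2*m) with hKdef
  have hK : n ≤ K := by
    calc n ≤ (n+1)*2 := by omega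
    _ ≤ (n+1)*(2*m) := Nat.mul_le_mul_left _ (by omega)
  have hKeq : K = 2*((n+1)*m) := by rw [hKdef]; ring
  have hKM : K % (2*m) = 0 := by rw [hKdef, Nat.mul_mod_left]
  have hKcast : ((K : ℕ) : ZMod (2*m)) = 0 := by
    rw [hKdef, Nat.cast_mul, ZMod.natCast_self, mul_zero]
  have hrep : ∀ r : ℕ, (((2*r : ℕ) : ZMod (2*m)) - n) = (((2*r + K - n : ℕ)) : ZMod (2*m)) := by
    intro r
    have h1 : (2*r + K - n : ℕ) = 2*r + (K - n) := by omega
    rw [h1, Nat.cast_add, Nat.cast_sub hK, hKcast]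
    ring
  set a := 2*r + K - n with hadef
  set a0 := 2*(n/2) + K - n with ha0def
  have hpar : distOf m a % 2 = n % 2 := by
    rw [distOf_parity m a hm]; omega
  have hpar0 : distOf m a0 % 2 = n % 2 := by
    rw [distOf_parity m a0 hm]; omega
  have hd0 : distOf m a0 = n % 2 := by
    rcases Nat.even_or_odd n with he | ho
    · have hne : n % 2 = 0 := Nat.even_iff.mp he
      have ha0K : a0 = K := by omega
      rw [ha0K]
      unfold distOf
      rw [hKM]
      simp [hne]
    · have hno : n % 2 = 1 := Nat.odd_iff.mp ho
      have ha0K : a0 = K - 1 := by omega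
      have hX : (n+1)*(2*m) = n*(2*m) + 2*m := by ring
      have hK1 : K - 1 = (2*m - 1) + n*(2*m) := by omega
      have hmodeq : a0 % (2*m) = 2*m - 1 := by
        rw [ha0K, hK1, Nat.add_mul_mod_self_right]
        exact Nat.mod_eq_of_lt (by omega)
      unfold distOf
      rw [hmodeq]
      split <;> omega
  have hx : NearD (2*m) (((2*r : ℕ) : ZMod (2*m)) - n) (distOf m a) := by
    rw [hrep r]; exact distOf_near m a hm
  have hy : NearD (2*m) (((2*(n/2) : ℕ) : ZMod (2*m)) - n) (distOf m a0) := by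
    rw [hrep (n/2)]; exact distOf_near m a0 hm
  have hle : distOf m a0 ≤ distOf m a := by omega
  have hparity : distOf m a % 2 = distOf m a0 % 2 := by omega
  exact funi m hm n (distOf m a) (distOf m a0) _ _ (distOf_le m a hm) (distOf_le m a0 hm)
    hx hy hle hparity


private lemma mod_step {m b ℓ : ℕ} (hm : 0 < m) (h : ℓ % m = b % m) (hlt : b < ℓ) :
    b + m ≤ ℓ := by
  have hdvd : m ∣ ℓ - b := (Nat.modEq_iff_dvd' hlt.le).mp (h.symm)
  have := Nat.le_of_dvd (by omega) hdvd
  omega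

private def Usum (n t b : ℕ) : ℕ := ∑ k ∈ range (n+1), n.choose (b + k*(t+1))

private def Dsum (n t a : ℕ) : ℕ :=
  ∑ ℓ ∈ range (a+1), if ℓ % (t+1) = a % (t+1) then n.choose ℓ else 0

private def prevDs (n t : ℕ) : ℕ → ℕ
  | 0 => 0
  | (a+1) => Dsum n t a

private lemma Usum_rec (n t b : ℕ) : Usum n t b = n.choose b + Usum n t (b + (t+1)) := by
  have h2 : n.choose ((b + (t+1)) + n*(t+1)) = 0 := by
    apply Nat.choose_eq_zero_of_lt
    have : n ≤ n * (t+1) := Nat.le_mul_of_pos_right n (by omega)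
    omega
  have hcongr : ∀ i ∈ range n, n.choose (b + (i+1)*(t+1)) = n.choose ((b+(t+1)) + i*(t+1)) :=
    fun i _ => by congr 1; ring
  calc Usum n t b
      = (∑ i ∈ range n, n.choose (b + (i+1)*(t+1))) + n.choose (b + 0*(t+1)) :=
        Finset.sum_range_succ' _ n
    _ = (∑ i ∈ range n, n.choose ((b+(t+1)) + i*(t+1))) + n.choose b := by
        rw [Finset.sum_congr rfl hcongr]; norm_num
    _ = n.choose b + Usum n t (b + (t+1)) := by
        rw [Usum, Finset.sum_range_succ, h2, add_zero, Nat.add_comm]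

private lemma Usum_zero (n t b : ℕ) (hb : n < b) : Usum n t b = 0 := by
  unfold Usum
  apply Finset.sum_eq_zero
  intro k _
  exact Nat.choose_eq_zero_of_lt (by omega)

private lemma Usum_mono (n t b : ℕ) (hb : n/2 ≤ b) : Usum n t (b+1) ≤ Usum n t b := by
  unfold Usum
  apply Finset.sum_le_sum
  intro k _
  have h1 : b + 1 + k*(t+1) = (b + k*(t+1)) + 1 := by ring
  rw [h1]
  exact choose_mono_up n _ (by omega)

private lemma Usum_enum (n t : ℕ) : ∀ j b, n + 1 - b ≤ j →
    Usum n t b = ∑ ℓ ∈ range (n+1), if (b ≤ ℓ ∧ ℓ % (t+1) = b % (t+1)) then n.choose ℓ else 0 := by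
  intro j
  induction j with
  | zero =>
    intro b hb
    rw [Usum_zero n t b (by omega)]
    symm
    apply Finset.sum_eq_zero
    intro ℓ hℓ
    rw [Finset.mem_range] at hℓ
    rw [if_neg (by rintro ⟨h1, -⟩; omega)]
  | succ j ih =>
    intro b hb
    by_cases hbn : n < b
    · rw [Usum_zero n t b hbn]
      symm
      apply Finset.sum_eq_zero
      intro ℓ hℓ
      rw [Finset.mem_range] at hℓ
      rw [if_neg (by rintro ⟨h1, -⟩; omega)]
    · push_neg at hbn
      rw [Usum_rec, ih (b + (t+1)) (by omega)]
      have hsplit : ∀ ℓ ∈ range (n+1),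
          (if (b ≤ ℓ ∧ ℓ % (t+1) = b % (t+1)) then n.choose ℓ else 0)
          = (if ℓ = b then n.choose ℓ else 0)
            + (if (b + (t+1) ≤ ℓ ∧ ℓ % (t+1) = (b + (t+1)) % (t+1)) then n.choose ℓ else 0) := by
        intro ℓ _
        have hmodeq : (b + (t+1)) % (t+1) = b % (t+1) := Nat.add_mod_right b (t+1)
        by_cases h1 : b ≤ ℓ ∧ ℓ % (t+1) = b % (t+1)
        · rw [if_pos h1]
          by_cases h2 : ℓ = b
          · rw [if_pos h2, if_neg (by rintro ⟨hc, -⟩; omega)]; omega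
          · have hstep : b + (t+1) ≤ ℓ := mod_step (by omega) h1.2 (by omega)
            rw [if_neg h2, if_pos ⟨hstep, by rw [hmodeq]; exact h1.2⟩]
            omega
        · rw [if_neg h1, if_neg (by rintro rfl; exact h1 ⟨le_refl _, rfl⟩),
            if_neg (by rintro ⟨hc1, hc2⟩; rw [hmodeq] at hc2; exact h1 ⟨by omega, hc2⟩)]
      rw [Finset.sum_congr rfl hsplit, Finset.sum_add_distrib]
      congr 1
      rw [Finset.sum_ite_eq' (range (n+1)) b (fun ℓ => n.choose ℓ)]
      rw [if_pos (Finset.mem_range.mpr (by omega))]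

private lemma Dsum_small (n t a : ℕ) (ha : a < t+1) : Dsum n t a = n.choose a := by
  unfold Dsum
  rw [Finset.sum_eq_single_of_mem a (Finset.mem_range.mpr (by omega))]
  · rw [if_pos rfl]
  · intro ℓ hℓ hne
    rw [Finset.mem_range] at hℓ
    rw [if_neg]
    rw [Nat.mod_eq_of_lt (by omega), Nat.mod_eq_of_lt (by omega)]
    omega

private lemma Dsum_rec (n t a : ℕ) (ha : t+1 ≤ a) :
    Dsum n t a = n.choose a + Dsum n t (a - (t+1)) := by
  unfold Dsum
  rw [Finset.sum_range_succ, if_pos rfl]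
  rw [Nat.add_comm]
  congr 1
  symm
  have hmodeq : (a - (t+1)) % (t+1) = a % (t+1) := by
    have h1 : a - (t+1) + (t+1) = a := by omega
    calc (a - (t+1)) % (t+1) = ((a - (t+1)) + (t+1)) % (t+1) := (Nat.add_mod_right _ _).symm
      _ = a % (t+1) := by rw [h1]
  calc (∑ ℓ ∈ range (a - (t+1) + 1), if ℓ % (t+1) = (a - (t+1)) % (t+1) then n.choose ℓ else 0)
      = ∑ ℓ ∈ range (a - (t+1) + 1), if ℓ % (t+1) = a % (t+1) then n.choose ℓ else 0 := by
        rw [hmodeq]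
    _ = ∑ ℓ ∈ range a, if ℓ % (t+1) = a % (t+1) then n.choose ℓ else 0 := by
        apply Finset.sum_subset
        · intro ℓ hℓ
          rw [Finset.mem_range] at hℓ ⊢
          omega
        · intro ℓ hℓ hnot
          rw [Finset.mem_range] at hℓ hnot
          rw [if_neg]
          intro hcond
          have := mod_step (m := t+1) (by omega) hcond.symm (by omega : ℓ < a)
          omega

private lemma Dsum_mono (n t : ℕ) : ∀ j a, a ≤ j → 1 ≤ a → a ≤ n/2 →
    Dsum n t (a-1) ≤ Dsum n t a := by
  intro j
  induction j with
  | zero => intro a haj; omega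
  | succ j ih =>
    intro a haj ha1 han
    have hchoose : n.choose (a-1) ≤ n.choose a := by
      have := Nat.choose_le_succ_of_lt_half_left (r := a-1) (n := n) (by omega)
      have h1 : a - 1 + 1 = a := by omega
      rwa [h1] at this
    by_cases hsmall : a < t+1
    · rw [Dsum_small n t a hsmall, Dsum_small n t (a-1) (by omega)]
      exact hchoose
    · push_neg at hsmall
      by_cases heq : a = t+1
      · rw [Dsum_rec n t a hsmall, Dsum_small n t (a-1) (by omega)]
        omega
      · have h2 : t+1 ≤ a - 1 := by omega
        rw [Dsum_rec n t a hsmall, Dsum_rec n t (a-1) h2]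
        have h3 : a - 1 - (t+1) = (a - (t+1)) - 1 := by omega
        rw [h3]
        have := ih (a - (t+1)) (by omega) (by omega) (by omega)
        omega

private lemma Ssplit (n t r : ℕ) (hr : r ≤ n) :
    (∑ ℓ ∈ range (n+1), if ℓ % (t+1) = r % (t+1) then n.choose ℓ else 0)
      = prevDs n t (r - t) + Usum n t r := by
  rw [Usum_enum n t (n+1) r (by omega)]
  have hsplit : ∀ ℓ ∈ range (n+1),
      (if ℓ % (t+1) = r % (t+1) then n.choose ℓ else 0)
      = (if (ℓ % (t+1) = r % (t+1) ∧ ℓ < r) then n.choose ℓ else 0)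
        + (if (r ≤ ℓ ∧ ℓ % (t+1) = r % (t+1)) then n.choose ℓ else 0) := by
    intro ℓ _
    by_cases h1 : ℓ % (t+1) = r % (t+1)
    · by_cases h2 : ℓ < r
      · rw [if_pos h1, if_pos ⟨h1, h2⟩, if_neg (by rintro ⟨hc, -⟩; omega)]; omega
      · rw [if_pos h1, if_neg (by rintro ⟨-, hc⟩; omega), if_pos ⟨by omega, h1⟩]; omega
    · rw [if_neg h1, if_neg (by rintro ⟨hc, -⟩; exact h1 hc),
        if_neg (by rintro ⟨-, hc⟩; exact h1 hc)]
  rw [Finset.sum_congr rfl hsplit, Finset.sum_add_distrib]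
  congr 1
  by_cases hrt : r ≤ t
  · have : r - t = 0 := by omega
    rw [this]
    show _ = 0
    apply Finset.sum_eq_zero
    intro ℓ hℓ
    rw [if_neg]
    rintro ⟨hcond, hlt⟩
    rw [Nat.mod_eq_of_lt (by omega), Nat.mod_eq_of_lt (by omega)] at hcond
    omega
  · push_neg at hrt
    have hr1 : r - t = (r - (t+1)) + 1 := by omega
    rw [hr1]
    show _ = Dsum n t (r - (t+1))
    unfold Dsum
    have hmodeq : (r - (t+1)) % (t+1) = r % (t+1) := by
      have h1 : r - (t+1) + (t+1) = r := by omega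
      calc (r - (t+1)) % (t+1) = ((r - (t+1)) + (t+1)) % (t+1) := (Nat.add_mod_right _ _).symm
        _ = r % (t+1) := by rw [h1]
    calc (∑ ℓ ∈ range (n+1), if ℓ % (t+1) = r % (t+1) ∧ ℓ < r then n.choose ℓ else 0)
        = ∑ ℓ ∈ range (r - (t+1) + 1), if ℓ % (t+1) = r % (t+1) ∧ ℓ < r then n.choose ℓ else 0 := by
          symm
          apply Finset.sum_subset
          · intro ℓ hℓ
            rw [Finset.mem_range] at hℓ ⊢
            omega
          · intro ℓ hℓ hnot
            rw [Finset.mem_range] at hℓ hnot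
            rw [if_neg]
            rintro ⟨hcond, hlt⟩
            have := mod_step (m := t+1) (by omega) hcond.symm (by omega : ℓ < r)
            omega
      _ = ∑ ℓ ∈ range (r - (t+1) + 1), if ℓ % (t+1) = (r - (t+1)) % (t+1) then n.choose ℓ else 0 := by
          rw [hmodeq]
          refine Finset.sum_congr rfl fun ℓ hℓ => ?_
          rw [Finset.mem_range] at hℓ
          by_cases hc : ℓ % (t+1) = r % (t+1)
          · rw [if_pos ⟨hc, by omega⟩, if_pos hc]
          · rw [if_neg (by rintro ⟨h,-⟩; exact hc h), if_neg hc]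

private def wt (n t b : ℕ) : ℚ :=
  if b < n/2 then ((prevDs n t (b+1-t) : ℚ) - (prevDs n t (b-t) : ℚ))
  else ((Usum n t b : ℚ) - (Usum n t (b+1) : ℚ))

private lemma wt_nonneg (n t b : ℕ) : 0 ≤ wt n t b := by
  unfold wt
  split
  · rename_i hb
    rw [sub_nonneg, Nat.cast_le]
    by_cases hbt : b < t
    · have h1 : b + 1 - t = 0 := by omega
      have h2 : b - t = 0 := by omega
      rw [h1, h2]
    · have h1 : b + 1 - t = (b - t) + 1 := by omega
      rw [h1]
      rcases Nat.eq_zero_or_pos (b - t) with h0 | hpos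
      · rw [h0]
        show prevDs n t 0 ≤ prevDs n t 1
        show 0 ≤ Dsum n t 0
        exact Nat.zero_le _
      · obtain ⟨x, hx⟩ : ∃ x, b - t = x + 1 := ⟨b - t - 1, by omega⟩
        rw [hx]
        show Dsum n t x ≤ Dsum n t (x+1)
        have h4 := Dsum_mono n t (x+1) (x+1) le_rfl (by omega) (by omega)
        simpa using h4
  · rename_i hb
    rw [sub_nonneg, Nat.cast_le]
    exact Usum_mono n t b (by omega)

private lemma tele (f : ℕ → ℚ) (s k : ℕ) :
    ∑ i ∈ range k, (f (s+i+1) - f (s+i)) = f (s+k) - f s := by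
  induction k with
  | zero => simp
  | succ k ih => rw [Finset.sum_range_succ, ih]; ring_nf

private lemma wt_low (n t b : ℕ) (hb : b < n/2) :
    wt n t b = (prevDs n t (b+1-t) : ℚ) - (prevDs n t (b-t) : ℚ) := if_pos hb

private lemma wt_high (n t b : ℕ) (hb : ¬ (b < n/2)) :
    wt n t b = (Usum n t b : ℚ) - (Usum n t (b+1) : ℚ) := if_neg hb

private lemma low_tele (n t ℓ k : ℕ) (hk : ∀ i < k, ℓ + i < n/2) :
    ∑ i ∈ range k, wt n t (ℓ + i)
      = (prevDs n t (ℓ + k - t) : ℚ) - (prevDs n t (ℓ - t) : ℚ) := by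
  have heq : ∀ i ∈ range k, wt n t (ℓ + i)
      = (fun x => (prevDs n t (x - t) : ℚ)) (ℓ+i+1) - (fun x => (prevDs n t (x - t) : ℚ)) (ℓ+i) := by
    intro i hi
    rw [Finset.mem_range] at hi
    rw [wt_low n t (ℓ+i) (hk i hi)]
  rw [Finset.sum_congr rfl heq, tele (fun x => (prevDs n t (x - t) : ℚ)) ℓ k]

private lemma tele' (f : ℕ → ℚ) (s k : ℕ) :
    ∑ i ∈ range k, (f (s+i) - f (s+i+1)) = f s - f (s+k) := by
  induction k with
  | zero => simp
  | succ k ih => rw [Finset.sum_range_succ, ih]; ring_nf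

private lemma high_tele (n t s k : ℕ) (hs : ∀ i < k, ¬ (s + i < n/2)) :
    ∑ i ∈ range k, wt n t (s + i)
      = (Usum n t s : ℚ) - (Usum n t (s + k) : ℚ) := by
  have heq : ∀ i ∈ range k, wt n t (s + i)
      = (fun x => (Usum n t x : ℚ)) (s+i) - (fun x => (Usum n t x : ℚ)) (s+i+1) := by
    intro i hi
    rw [Finset.mem_range] at hi
    rw [wt_high n t (s+i) (hs i hi)]
  rw [Finset.sum_congr rfl heq, tele' (fun x => (Usum n t x : ℚ)) s k]

private lemma dsum_ge (n t ℓ : ℕ) :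
    (n.choose ℓ : ℚ) ≤ (Dsum n t ℓ : ℚ) - (prevDs n t (ℓ - t) : ℚ) := by
  by_cases hℓ : ℓ < t+1
  · have h1 : ℓ - t = 0 := by omega
    rw [h1, Dsum_small n t ℓ hℓ]
    show _ ≤ _ - ((0:ℕ) : ℚ)
    simp
  · push_neg at hℓ
    have h1 : ℓ - t = (ℓ - (t+1)) + 1 := by omega
    rw [h1]
    show _ ≤ _ - (Dsum n t (ℓ - (t+1)) : ℚ)
    rw [Dsum_rec n t ℓ hℓ]
    push_cast
    ring_nf
    simp

private lemma cover (n t ℓ : ℕ) (hℓ : ℓ ≤ n) :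
    (n.choose ℓ : ℚ) ≤ ∑ i ∈ range (t+1), wt n t (ℓ + i) := by
  by_cases hup : n/2 ≤ ℓ
  · rw [high_tele n t ℓ (t+1) (fun i _ => by omega)]
    have hrec := Usum_rec n t ℓ
    have h2 : (Usum n t ℓ : ℚ) = (n.choose ℓ : ℚ) + (Usum n t (ℓ + (t+1)) : ℚ) := by
      rw [hrec]; push_cast; ring
    rw [h2]
    simp
  · push_neg at hup
    by_cases hlow : ℓ + t < n/2
    · rw [low_tele n t ℓ (t+1) (fun i hi => by omega)]
      have h1 : ℓ + (t+1) - t = ℓ + 1 := by omega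
      rw [h1]
      exact dsum_ge n t ℓ
    · -- central case
      push_neg at hlow
      set c := n/2 with hc
      set j := c - ℓ with hj
      have hj1 : 1 ≤ j := by omega
      have hjt : j ≤ t := by omega
      have hsplit : ∑ i ∈ range (t+1), wt n t (ℓ + i)
          = (∑ i ∈ range j, wt n t (ℓ + i)) + (∑ i ∈ Finset.Ico j (t+1), wt n t (ℓ + i)) :=
        (Finset.sum_range_add_sum_Ico _ (by omega)).symm
      have hico : ∑ i ∈ Finset.Ico j (t+1), wt n t (ℓ + i)
          = ∑ i ∈ range (t+1-j), wt n t (c + i) := by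
        rw [Finset.sum_Ico_eq_sum_range]
        refine Finset.sum_congr rfl fun i _ => ?_
        congr 1
        omega
      rw [hsplit, hico, low_tele n t ℓ j (fun i hi => by omega),
        high_tele n t c (t+1-j) (fun i _ => by omega)]
      have h1 : ℓ + j = c := by omega
      have h2 : c + (t+1-j) = ℓ + (t+1) := by omega
      rw [h1, h2]
      -- use the key lemma via Ssplit
      have hkey := key_lemma n (t+1) ℓ (by omega)
      rw [Ssplit n t ℓ hℓ, Ssplit n t (n/2) (by omega)] at hkey
      have hkeyq : (prevDs n t (ℓ - t) : ℚ) + (Usum n t ℓ : ℚ)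
          ≤ (prevDs n t (c - t) : ℚ) + (Usum n t c : ℚ) := by
        rw [hc]
        exact_mod_cast hkey
      have hrec : (Usum n t ℓ : ℚ) = (n.choose ℓ : ℚ) + (Usum n t (ℓ + (t+1)) : ℚ) := by
        rw [Usum_rec n t ℓ]; push_cast; ring
      linarith

private lemma total (n t : ℕ) :
    ∑ b ∈ range (n+t+1), wt n t b
      = ((∑ ℓ ∈ range (n+1), if ℓ % (t+1) = (n/2) % (t+1) then n.choose ℓ else 0 : ℕ) : ℚ) := by
  set c := n/2 with hc
  have hsplit : ∑ b ∈ range (n+t+1), wt n t b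
      = (∑ b ∈ range c, wt n t b) + (∑ b ∈ Finset.Ico c (n+t+1), wt n t b) :=
    (Finset.sum_range_add_sum_Ico _ (by omega)).symm
  have hico : ∑ b ∈ Finset.Ico c (n+t+1), wt n t b = ∑ i ∈ range (n+t+1-c), wt n t (c + i) := by
    rw [Finset.sum_Ico_eq_sum_range]
  have hlowsum : ∑ b ∈ range c, wt n t b
      = (prevDs n t (c - t) : ℚ) - (prevDs n t (0 - t) : ℚ) := by
    have := low_tele n t 0 c (fun i hi => by omega)
    simp only [Nat.zero_add] at this
    rw [← this]
  have hhighsum : ∑ i ∈ range (n+t+1-c), wt n t (c + i)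
      = (Usum n t c : ℚ) - (Usum n t (c + (n+t+1-c)) : ℚ) :=
    high_tele n t c _ (fun i _ => by omega)
  rw [hsplit, hico, hlowsum, hhighsum]
  have h1 : c + (n+t+1-c) = n+t+1 := by omega
  rw [h1, Usum_zero n t (n+t+1) (by omega)]
  have h2 : (0 : ℕ) - t = 0 := by omega
  rw [h2]
  have h3 : prevDs n t 0 = 0 := rfl
  rw [h3, Ssplit n t c (by omega)]
  push_cast
  ring

private lemma window_lym (n t : ℕ) (F : Finset (Finset (Fin n)))
    (hF : ∀ A ∈ F, ∀ B ∈ F, A ≠ B → A ⊆ B → B.card - A.card > t) (b : ℕ) :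
    (∑ A ∈ F, if A.card ≤ b ∧ b ≤ A.card + t then ((n.choose A.card : ℚ))⁻¹ else 0) ≤ 1 := by
  classical
  set 𝒜 := F.filter (fun A => A.card ≤ b ∧ b ≤ A.card + t) with h𝒜
  have hanti : IsAntichain (· ⊆ ·) (𝒜 : Set (Finset (Fin n))) := by
    intro A hA B hB hne hsub
    rw [Finset.mem_coe, h𝒜, Finset.mem_filter] at hA hB
    have h1 := hF A hA.1 B hB.1 hne hsub
    have h2 := hA.2
    have h3 := hB.2
    omega
  have hmaps : ∀ A ∈ 𝒜, A.card ∈ range (n+1) := by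
    intro A _
    rw [Finset.mem_range]
    have := Finset.card_le_univ A
    rw [Fintype.card_fin] at this
    omega
  calc (∑ A ∈ F, if A.card ≤ b ∧ b ≤ A.card + t then ((n.choose A.card : ℚ))⁻¹ else 0)
      = ∑ A ∈ 𝒜, ((n.choose A.card : ℚ))⁻¹ := (Finset.sum_filter _ _).symm
    _ = ∑ r ∈ range (n+1), ∑ A ∈ 𝒜.filter (fun A => A.card = r), ((n.choose A.card : ℚ))⁻¹ :=
        (Finset.sum_fiberwise_of_maps_to hmaps _).symm
    _ = ∑ r ∈ range (n+1), ((𝒜 # r).card : ℚ) / (n.choose r : ℚ) := by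
        refine Finset.sum_congr rfl fun r _ => ?_
        have hslice : 𝒜.filter (fun A => A.card = r) = 𝒜 # r := rfl
        rw [hslice]
        have hterm : ∀ A ∈ 𝒜 # r, ((n.choose A.card : ℚ))⁻¹ = ((n.choose r : ℚ))⁻¹ := by
          intro A hA
          rw [(Finset.mem_slice.mp hA).2]
        rw [Finset.sum_congr rfl hterm, Finset.sum_const, nsmul_eq_mul]
        rw [div_eq_mul_inv]
    _ ≤ 1 := by
        have := Finset.sum_card_slice_div_choose_le_one (𝕜 := ℚ) hanti
        rwa [Fintype.card_fin] at this

private lemma master (n t : ℕ) (F : Finset (Finset (Fin n)))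
    (hF : ∀ A ∈ F, ∀ B ∈ F, A ≠ B → A ⊆ B → B.card - A.card > t) :
    F.card ≤ ∑ ℓ ∈ range (n+1), if ℓ % (t+1) = (n/2) % (t+1) then n.choose ℓ else 0 := by
  classical
  have hcard : ∀ A ∈ F, A.card ≤ n := by
    intro A _
    have := Finset.card_le_univ A
    rwa [Fintype.card_fin] at this
  have hchoosepos : ∀ A ∈ F, (0:ℚ) < (n.choose A.card : ℚ) := by
    intro A hA
    exact_mod_cast Nat.choose_pos (hcard A hA)
  have step1 : (F.card : ℚ) ≤ ∑ A ∈ F, (∑ i ∈ range (t+1), wt n t (A.card + i)) / (n.choose A.card : ℚ) := by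
    rw [Finset.card_eq_sum_ones F]
    push_cast
    apply Finset.sum_le_sum
    intro A hA
    rw [le_div_iff₀ (hchoosepos A hA), one_mul]
    exact cover n t A.card (hcard A hA)
  have step2 : ∀ A ∈ F, (∑ i ∈ range (t+1), wt n t (A.card + i)) / (n.choose A.card : ℚ)
      = ∑ b ∈ range (n+t+1), (if A.card ≤ b ∧ b ≤ A.card + t then wt n t b * ((n.choose A.card : ℚ))⁻¹ else 0) := by
    intro A hA
    have hwin : ∑ i ∈ range (t+1), wt n t (A.card + i)
        = ∑ b ∈ range (n+t+1), (if A.card ≤ b ∧ b ≤ A.card + t then wt n t b else 0) := by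
      have h1 : ∑ b ∈ range (n+t+1), (if A.card ≤ b ∧ b ≤ A.card + t then wt n t b else 0)
          = ∑ b ∈ range (n+t+1), (if b ∈ Finset.Icc A.card (A.card + t) then wt n t b else 0) := by
        refine Finset.sum_congr rfl fun b _ => ?_
        simp only [Finset.mem_Icc]
      rw [h1, Finset.sum_ite_mem, Finset.inter_eq_right.mpr
        (by intro b hb; rw [Finset.mem_Icc] at hb; rw [Finset.mem_range]
            have := hcard A hA; omega)]
      rw [← Finset.Ico_add_one_right_eq_Icc, Finset.sum_Ico_eq_sum_range]
      have h2 : A.card + t + 1 - A.card = t + 1 := by omega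
      rw [h2]
    rw [div_eq_mul_inv, hwin, Finset.sum_mul]
    refine Finset.sum_congr rfl fun b _ => ?_
    rw [ite_mul, zero_mul]
  have step3 : (F.card : ℚ) ≤ ∑ b ∈ range (n+t+1), wt n t b
      * (∑ A ∈ F, if A.card ≤ b ∧ b ≤ A.card + t then ((n.choose A.card : ℚ))⁻¹ else 0) := by
    refine step1.trans (le_of_eq ?_)
    rw [Finset.sum_congr rfl step2, Finset.sum_comm]
    refine Finset.sum_congr rfl fun b _ => ?_
    rw [Finset.mul_sum]
    refine Finset.sum_congr rfl fun A _ => ?_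
    rw [mul_ite, mul_zero]
  have step4 : (F.card : ℚ) ≤ ∑ b ∈ range (n+t+1), wt n t b := by
    refine step3.trans (Finset.sum_le_sum fun b _ => ?_)
    exact mul_le_of_le_one_right (wt_nonneg n t b) (window_lym n t F hF b)
  rw [total n t] at step4
  exact_mod_cast step4

private lemma member_card (n t : ℕ) :
    ((Finset.univ.filter (fun A : Finset (Fin n) => A.card % (t+1) = (n/2) % (t+1))).card)
      = ∑ ℓ ∈ range (n+1), if ℓ % (t+1) = (n/2) % (t+1) then n.choose ℓ else 0 := by
  classical
  set G := Finset.univ.filter (fun A : Finset (Fin n) => A.card % (t+1) = (n/2) % (t+1)) with hG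
  have hmaps : ∀ A ∈ G, A.card ∈ range (n+1) := by
    intro A _
    rw [Finset.mem_range]
    have := Finset.card_le_univ A
    rw [Fintype.card_fin] at this
    omega
  rw [Finset.card_eq_sum_card_fiberwise hmaps]
  refine Finset.sum_congr rfl fun r hr => ?_
  rw [Finset.mem_range] at hr
  by_cases hc : r % (t+1) = (n/2) % (t+1)
  · rw [if_pos hc]
    have hset : G.filter (fun A => A.card = r)
        = Finset.univ.filter (fun A : Finset (Fin n) => A.card = r) := by
      rw [hG, Finset.filter_filter]
      refine Finset.filter_congr fun A _ => ?_
      constructor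
      · rintro ⟨-, h2⟩; exact h2
      · rintro h2; exact ⟨by rw [h2]; exact hc, h2⟩
    rw [hset]
    have hpow : Finset.univ.filter (fun A : Finset (Fin n) => A.card = r)
        = Finset.powersetCard r (Finset.univ : Finset (Fin n)) := by
      rw [Finset.powersetCard_eq_filter, Finset.powerset_univ]
    rw [hpow, Finset.card_powersetCard, Finset.card_univ, Fintype.card_fin]
  · rw [if_neg hc]
    rw [Finset.card_eq_zero]
    apply Finset.filter_eq_empty_iff.mpr
    intro A hA
    rw [hG, Finset.mem_filter] at hA
    intro h2
    rw [h2] at hA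
    exact hc hA.2

private lemma member_gap (n t : ℕ) (A B : Finset (Fin n))
    (hA : A.card % (t+1) = (n/2) % (t+1)) (hB : B.card % (t+1) = (n/2) % (t+1))
    (hne : A ≠ B) (hsub : A ⊆ B) : B.card - A.card > t := by
  have hlt : A.card < B.card := Finset.card_lt_card (ssubset_of_subset_of_ne hsub hne)
  have := mod_step (m := t+1) (b := A.card) (ℓ := B.card) (by omega) (by omega) hlt
  omega

theorem stmt5 (n t : ℕ) :
    IsGreatest {k | ∃ C : Finset (Finset (Fin n)),
        (∀ A ∈ C, ∀ B ∈ C, A ≠ B → A ⊆ B → B.card - A.card > t) ∧ C.card = k}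
      (∑ ℓ ∈ Finset.range (n + 1),
        if ℓ % (t + 1) = (n / 2) % (t + 1) then n.choose ℓ else 0) := by
  classical
  constructor
  · refine ⟨Finset.univ.filter (fun A : Finset (Fin n) => A.card % (t+1) = (n/2) % (t+1)),
      fun A hA B hB hne hsub => ?_, member_card n t⟩
    rw [Finset.mem_filter] at hA hB
    exact member_gap n t A B hA.2 hB.2 hne hsub
  · rintro k ⟨C, hC, rfl⟩
    exact master n t C hC
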